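/- The pair β_n = 1/(q²;q)_{2n}, with α_{3m-1} = q^{6m²-m}, α_{3m} = q^{6m²+m}, α_{3m+1} = -q^{6m²+5m+1} - q^{6m²+7m+2}, is a Bailey pair relative to a = q; that is, β_n = ∑_{r=0}^n α_r/((q;q)_{n-r}(q²;q)_{n+r}) for all n ≥ 0. -/

import Mathlib

open Finset

noncomputable def qPoch (a q : ℂ) (n : ℕ) : ℂ := ∏ i ∈ Finset.range n, (1 - a * q ^ i)

noncomputable def qInf (q : ℂ) : ℂ := ∏' i : ℕ, (1 - q ^ (i + 1))

def zsgn (m : ℤ) : ℤ := if 0 ≤ m then 1 else -1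

noncomputable def alphaS5 (q : ℂ) (n : ℕ) : ℂ :=
  if n % 3 = 0 then q ^ (6 * ((n : ℤ) / 3) ^ 2 + ((n : ℤ) / 3) : ℤ)
  else if n % 3 = 1 then -q ^ (6 * ((n : ℤ) / 3) ^ 2 + 5 * ((n : ℤ) / 3) + 1 : ℤ) - q ^ (6 * ((n : ℤ) / 3) ^ 2 + 7 * ((n : ℤ) / 3) + 2 : ℤ)
  else q ^ (6 * (((n : ℤ) + 1) / 3) ^ 2 - (((n : ℤ) + 1) / 3) : ℤ)

noncomputable def GB (q : ℂ) : ℕ → ℤ → ℂ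
  | 0, k => if k = 0 then 1 else 0
  | (m+1), k => GB q m k + q ^ ((m : ℤ) + 1 - k).toNat * GB q m (k-1)

lemma GB_neg (q : ℂ) (m : ℕ) (k : ℤ) (h : k < 0) : GB q m k = 0 := by
  induction m generalizing k with
  | zero => simp [GB]; omega
  | succ m ih =>
    rw [GB, ih k h, ih (k-1) (by omega)]
    ring

lemma GB_gt (q : ℂ) (m : ℕ) (k : ℤ) (h : (m : ℤ) < k) : GB q m k = 0 := by
  induction m generalizing k with
  | zero => simp [GB]; omega
  | succ m ih =>
    rw [GB, ih k (by push_cast at h ⊢; omega), ih (k-1) (by push_cast at h ⊢; omega)]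
    ring

lemma GB_zero_right (q : ℂ) (m : ℕ) : GB q m 0 = 1 := by
  induction m with
  | zero => simp [GB]
  | succ m ih => rw [GB, ih, GB_neg q m _ (by omega)]; ring

lemma GB_pascal2 (q : ℂ) (m : ℕ) (k : ℤ) :
    GB q (m+1) k = q ^ k.toNat * GB q m k + GB q m (k-1) := by
  induction m generalizing k with
  | zero =>
    simp only [GB, Nat.cast_zero]
    by_cases h0 : k = 0
    · subst h0; norm_num
    · by_cases h1 : k = 1
      · subst h1; norm_num
      · rw [if_neg h0, if_neg (by omega : ¬ k - 1 = 0)]; ring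
  | succ m ih =>
    by_cases hk : k < 0
    · rw [GB_neg q _ k hk, GB_neg q _ k hk, GB_neg q _ (k-1) (by omega)]; ring
    push_neg at hk
    rw [show GB q (m+1+1) k = GB q (m+1) k + q ^ ((m:ℤ) + 1 + 1 - k).toNat * GB q (m+1) (k-1) from rfl]
    nth_rewrite 1 [ih k]
    nth_rewrite 1 [ih (k-1)]
    rw [show GB q (m+1) k = GB q m k + q ^ ((m:ℤ) + 1 - k).toNat * GB q m (k-1) from rfl,
      show GB q (m+1) (k-1) = GB q m (k-1) + q ^ ((m:ℤ) + 1 - (k-1)).toNat * GB q m (k-1-1) from rfl]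
    by_cases hz : GB q m (k - 1) = 0
    · rw [hz]; ring
    · have h1 : 0 ≤ k - 1 := by by_contra h; exact hz (GB_neg q m _ (by omega))
      have h2 : k - 1 ≤ (m : ℤ) := by by_contra h; exact hz (GB_gt q m _ (by omega))
      have e1 : q ^ ((m:ℤ) + 1 + 1 - k).toNat * q ^ (k-1).toNat
          = q ^ k.toNat * q ^ ((m:ℤ) + 1 - k).toNat := by
        rw [← pow_add, ← pow_add]; congr 1; omega
      have e2 : ((m:ℤ) + 1 + 1 - k) = ((m:ℤ) + 1 - (k-1)) := by ring
      rw [e2] at e1 ⊢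
      linear_combination GB q m (k-1) * e1

lemma GB_symm (q : ℂ) (m : ℕ) (k : ℤ) : GB q m k = GB q m ((m : ℤ) - k) := by
  induction m generalizing k with
  | zero =>
    simp only [GB, Nat.cast_zero]
    by_cases h0 : k = 0
    · subst h0; norm_num
    · rw [if_neg h0, if_neg (by omega : ¬ (0:ℤ) - k = 0)]
  | succ m ih =>
    have a : GB q m ((m:ℤ) + 1 - k) = GB q m (k - 1) := by
      rw [ih ((m:ℤ) + 1 - k)]; congr 1; ring
    have b : GB q m ((m:ℤ) + 1 - k - 1) = GB q m k := by
      rw [ih k]; congr 1; ring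
    rw [show ((m+1:ℕ):ℤ) - k = (m:ℤ) + 1 - k by push_cast; ring,
      GB_pascal2 q m ((m:ℤ) + 1 - k), a, b,
      show GB q (m+1) k = GB q m k + q ^ ((m:ℤ) + 1 - k).toNat * GB q m (k-1) from rfl]
    ring

lemma qPoch_add (a q : ℂ) (s t : ℕ) :
    qPoch a q (s + t) = qPoch a q s * qPoch (a * q ^ s) q t := by
  rw [qPoch, qPoch, qPoch, prod_range_add]
  congr 1
  refine prod_congr rfl fun i _ => ?_
  rw [mul_assoc, ← pow_add]

lemma qPoch_succ (a q : ℂ) (s : ℕ) :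
    qPoch a q (s + 1) = qPoch a q s * (1 - a * q ^ s) := by
  rw [qPoch, qPoch, prod_range_succ]

lemma qPoch_ne_zero (q : ℂ) (hq : ‖q‖ < 1) (a : ℂ) (s : ℕ) (ha : a = q ^ (s+1)) (n : ℕ) :
    qPoch a q n ≠ 0 := by
  rw [qPoch, Finset.prod_ne_zero_iff]
  intro i _
  subst ha
  rw [← pow_add]
  intro h
  have h1 : q ^ (s + 1 + i) = 1 := by
    have := sub_eq_zero.mp h
    linear_combination -this
  have h2 : ‖q ^ (s+1+i)‖ < 1 := by
    rw [norm_pow]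
    calc ‖q‖ ^ (s+1+i) ≤ ‖q‖ ^ 1 := by
          apply pow_le_pow_of_le_one (norm_nonneg q) (le_of_lt hq); omega
      _ < 1 := by simpa using hq
  rw [h1] at h2; simp at h2

lemma GB_qPoch (q : ℂ) (m k : ℕ) (hk : k ≤ m) :
    GB q m (k : ℤ) * (qPoch q q k * qPoch q q (m - k)) = qPoch q q m := by
  induction m generalizing k with
  | zero =>
    interval_cases k
    simp [GB, qPoch]
  | succ m ih =>
    by_cases he : k = m + 1
    · subst he
      have hd : GB q (m+1) ((m+1 : ℕ) : ℤ) = 1 := by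
        rw [GB_symm, sub_self, GB_zero_right]
      rw [hd, Nat.sub_self]
      simp [qPoch]
    · have hk' : k ≤ m := by omega
      rcases Nat.eq_zero_or_pos k with h0 | h0
      · subst h0
        rw [show ((0:ℕ):ℤ) = (0:ℤ) from rfl, GB_zero_right]
        simp [qPoch]
      · obtain ⟨j, rfl⟩ : ∃ j, k = j + 1 := ⟨k - 1, by omega⟩
        obtain ⟨t, rfl⟩ : ∃ t, m = j + t + 1 := ⟨m - j - 1, by omega⟩
        have IH1 := ih (j+1) (by omega)
        have IH2 := ih j (by omega)
        rw [show (j + t + 1) - (j + 1) = t from by omega] at IH1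
        rw [show (j + t + 1) - j = t + 1 from by omega] at IH2
        rw [show GB q (j+t+1+1) ((j+1 : ℕ) : ℤ)
            = GB q (j+t+1) ((j+1:ℕ) : ℤ)
              + q ^ (((j+t+1 : ℕ) : ℤ) + 1 - ((j+1:ℕ):ℤ)).toNat * GB q (j+t+1) (((j+1:ℕ):ℤ) - 1) from rfl,
          show (((j+t+1 : ℕ) : ℤ) + 1 - ((j+1:ℕ):ℤ)).toNat = t + 1 from by omega,
          show ((j+1:ℕ):ℤ) - 1 = ((j:ℕ):ℤ) from by push_cast; ring,
          show (j + t + 1 + 1) - (j + 1) = t + 1 from by omega,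
          qPoch_succ q q (j+t+1), qPoch_succ q q t, qPoch_succ q q j]
        rw [qPoch_succ q q t] at IH2
        rw [qPoch_succ q q j] at IH1
        linear_combination (1 - q * q ^ t) * IH1
          + q ^ (t+1) * (1 - q * q ^ j) * IH2

def Ej (j : ℤ) : ℕ := ((3*j*j + j)/2).toNat

lemma Ej_spec (j : ℤ) : 2 * (Ej j : ℤ) = 3*j*j + j := by
  have hev : ∃ c : ℤ, 3*j*j + j = c + c := by
    rcases Int.even_or_odd j with ⟨t, rfl⟩ | ⟨t, rfl⟩
    · exact ⟨6*t*t + t, by ring⟩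
    · exact ⟨6*t*t + 7*t + 2, by ring⟩
  have hnn : 0 ≤ 3*j*j + j := by
    rcases le_or_gt 0 j with h | h
    · positivity
    · nlinarith
  obtain ⟨c, hc⟩ := hev
  rw [Ej]
  zify [Int.toNat_of_nonneg (by omega : (0:ℤ) ≤ (3*j*j+j)/2)]
  omega

def Kf (m : ℕ) (j : ℤ) : ℤ := ((m : ℤ) - 3*j)/2

noncomputable def trm (q : ℂ) (m : ℕ) (j : ℤ) : ℂ :=
  (if j % 2 = 0 then 1 else -1) * q ^ Ej j * GB q m (Kf m j)

noncomputable def badt (q : ℂ) (m : ℕ) (j : ℤ) : ℂ :=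
  (if j % 2 = 0 then 1 else -1) * q ^ Ej j *
    (if ((m:ℤ) + j) % 2 = 0 then q ^ (((m:ℤ))+1 - Kf m j).toNat * GB q m (Kf m j - 1)
     else q ^ (Kf m j + 1).toNat * GB q m (Kf m j + 1))

noncomputable def Ssum (q : ℂ) (m : ℕ) : ℂ := ∑ j ∈ Icc (-(m:ℤ)) (m:ℤ), trm q m j

lemma trm_vanish (q : ℂ) (m : ℕ) (j : ℤ) (h : (m:ℤ) < j ∨ j < -(m:ℤ)) : trm q m j = 0 := by
  have : GB q m (Kf m j) = 0 := by
    rcases h with h | h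
    · exact GB_neg q m _ (by unfold Kf; omega)
    · exact GB_gt q m _ (by unfold Kf; omega)
  rw [trm, this, mul_zero]

lemma Ssum_eq (q : ℂ) (m : ℕ) (a b : ℤ) (ha : a ≤ -(m:ℤ)) (hb : (m:ℤ) ≤ b) :
    ∑ j ∈ Icc a b, trm q m j = Ssum q m := by
  rw [Ssum]
  symm
  apply Finset.sum_subset
  · intro x hx; simp only [mem_Icc] at hx ⊢; omega
  · intro x hx hx'
    simp only [mem_Icc] at hx hx'
    exact trm_vanish q m x (by omega)

lemma badt_vanish (q : ℂ) (m : ℕ) (j : ℤ) (h : (m:ℤ) < j ∨ j < -((m:ℤ)+1)) : badt q m j = 0 := by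
  rcases h with h | h
  · have h1 : Kf m j - 1 < 0 := by unfold Kf; omega
    have h2 : Kf m j + 1 < 0 := by unfold Kf; omega
    rw [badt, GB_neg q m _ h1, GB_neg q m _ h2]
    split_ifs <;> ring
  · have h1 : (m:ℤ) < Kf m j - 1 := by unfold Kf; omega
    have h2 : (m:ℤ) < Kf m j + 1 := by unfold Kf; omega
    rw [badt, GB_gt q m _ h1, GB_gt q m _ h2]
    split_ifs <;> ring

lemma trm_succ (q : ℂ) (m : ℕ) (j : ℤ) :
    trm q (m+1) j = trm q m j + badt q m j := by
  by_cases hp : ((m:ℤ) + j) % 2 = 0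
  · have hK : Kf (m+1) j = Kf m j := by unfold Kf; push_cast; omega
    rw [trm, trm, badt, if_pos hp, hK,
      show GB q (m+1) (Kf m j) = GB q m (Kf m j) + q ^ ((m:ℤ)+1-(Kf m j)).toNat * GB q m (Kf m j - 1) from rfl]
    ring
  · have hK : Kf (m+1) j = Kf m j + 1 := by unfold Kf; push_cast; omega
    rw [trm, trm, badt, if_neg hp, hK, GB_pascal2 q m (Kf m j + 1),
      show Kf m j + 1 - 1 = Kf m j by ring]
    ring

lemma badt_pair (q : ℂ) (m : ℕ) (j : ℤ) (h : ((m:ℤ) + j) % 2 = 0) :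
    badt q m (j+1) = - badt q m j := by
  have hK : Kf m (j+1) = Kf m j - 2 := by unfold Kf; omega
  have hp1 : ¬ ((m:ℤ) + (j+1)) % 2 = 0 := by omega
  rw [badt, badt, if_neg hp1, if_pos h, hK,
    show Kf m j - 2 + 1 = Kf m j - 1 by ring]
  have hsgn : (if (j+1) % 2 = 0 then (1:ℂ) else -1) = - (if j % 2 = 0 then (1:ℂ) else -1) := by
    by_cases hj : j % 2 = 0
    · rw [if_pos hj, if_neg (by omega)]
    · rw [if_neg hj, if_pos (by omega)]; norm_num
  by_cases hz : GB q m (Kf m j - 1) = 0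
  · rw [hz]; ring
  · have h1 : 0 ≤ Kf m j - 1 := by by_contra hc; exact hz (GB_neg q m _ (by omega))
    have h2 : Kf m j - 1 ≤ (m:ℤ) := by by_contra hc; exact hz (GB_gt q m _ (by omega))
    have h2K : 2 * Kf m j = (m:ℤ) - 3*j := by unfold Kf; omega
    have hE : Ej (j+1) + (Kf m j - 1).toNat = Ej j + ((m:ℤ) + 1 - Kf m j).toNat := by
      have e1 := Ej_spec j
      have e2 := Ej_spec (j+1)
      have e3 : 3*(j+1)*(j+1) + (j+1) = (3*j*j + j) + (6*j + 4) := by ring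
      rw [e3] at e2
      generalize hA : 3*j*j + j = A at e1 e2
      omega
    have hq : q ^ Ej (j+1) * q ^ (Kf m j - 1).toNat = q ^ Ej j * q ^ ((m:ℤ) + 1 - Kf m j).toNat := by
      rw [← pow_add, ← pow_add, hE]
    rw [hsgn]
    linear_combination (-(if j % 2 = 0 then (1:ℂ) else -1)) * GB q m (Kf m j - 1) * hq

lemma sum_shift (f : ℤ → ℂ) (a b : ℤ) :
    ∑ j ∈ Icc a b, f j = ∑ j ∈ Icc (a-1) (b-1), f (j+1) := by
  rw [show Icc a b = Finset.map (addRightEmbedding 1) (Icc (a-1) (b-1)) by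
    rw [Finset.map_add_right_Icc]; congr 1 <;> ring]
  rw [Finset.sum_map]
  rfl

lemma bad_sum (q : ℂ) (m : ℕ) :
    ∑ j ∈ Icc (-(m:ℤ)-1) ((m:ℤ)+1), badt q m j = 0 := by
  set g : ℤ → ℂ := fun j => if ((m:ℤ) + j) % 2 = 0 then badt q m j else 0 with hg
  set h : ℤ → ℂ := fun j => if ((m:ℤ) + j) % 2 = 0 then 0 else badt q m j with hh
  have hsplit : ∀ j, badt q m j = g j + h j := by
    intro j; simp only [hg, hh]; split_ifs <;> ring
  have hshift : ∀ j, h (j+1) = - g j := by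
    intro j
    by_cases hp : ((m:ℤ) + j) % 2 = 0
    · simp only [hg, hh, if_pos hp, if_neg (show ¬ ((m:ℤ) + (j+1)) % 2 = 0 by omega)]
      exact badt_pair q m j hp
    · simp only [hg, hh, if_neg hp, if_pos (show ((m:ℤ) + (j+1)) % 2 = 0 by omega)]
      ring
  have hgz : ∀ j : ℤ, ((m:ℤ) < j ∨ j < -((m:ℤ)+1)) → g j = 0 := by
    intro j hj; simp only [hg]; rw [badt_vanish q m j hj]; split_ifs <;> rfl
  have hhz : ∀ j : ℤ, ((m:ℤ) < j ∨ j < -((m:ℤ)+1)) → h j = 0 := by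
    intro j hj; simp only [hh]; rw [badt_vanish q m j hj]; split_ifs <;> rfl
  calc ∑ j ∈ Icc (-(m:ℤ)-1) ((m:ℤ)+1), badt q m j
      = ∑ j ∈ Icc (-(m:ℤ)-1) ((m:ℤ)+1), g j + ∑ j ∈ Icc (-(m:ℤ)-1) ((m:ℤ)+1), h j := by
        rw [← Finset.sum_add_distrib]; exact Finset.sum_congr rfl fun j _ => hsplit j
    _ = ∑ j ∈ Icc (-(m:ℤ)-1) ((m:ℤ)+1), g j + ∑ j ∈ Icc (-(m:ℤ)-2) ((m:ℤ)), (- g j) := by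
        rw [sum_shift h (-(m:ℤ)-1) ((m:ℤ)+1)]
        congr 1
        · refine Finset.sum_congr (by congr 1 <;> ring) fun j _ => hshift j
    _ = 0 := by
        rw [Finset.sum_neg_distrib]
        have e1 : ∑ j ∈ Icc (-(m:ℤ)-1) ((m:ℤ)+1), g j = ∑ j ∈ Icc (-(m:ℤ)-2) ((m:ℤ)+1), g j := by
          apply Finset.sum_subset
          · intro x hx; simp only [mem_Icc] at hx ⊢; omega
          · intro x hx hx'; simp only [mem_Icc] at hx hx'; exact hgz x (by omega)
        have e2 : ∑ j ∈ Icc (-(m:ℤ)-2) ((m:ℤ)), g j = ∑ j ∈ Icc (-(m:ℤ)-2) ((m:ℤ)+1), g j := by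
          apply Finset.sum_subset
          · intro x hx; simp only [mem_Icc] at hx ⊢; omega
          · intro x hx hx'; simp only [mem_Icc] at hx hx'; exact hgz x (by omega)
        rw [e1, e2]; ring

lemma Ssum_succ (q : ℂ) (m : ℕ) : Ssum q (m+1) = Ssum q m := by
  have : Ssum q (m+1) = ∑ j ∈ Icc (-(m:ℤ)-1) ((m:ℤ)+1), trm q (m+1) j := by
    rw [Ssum]; congr 1; congr 1 <;> push_cast <;> ring
  rw [this]
  calc ∑ j ∈ Icc (-(m:ℤ)-1) ((m:ℤ)+1), trm q (m+1) j
      = ∑ j ∈ Icc (-(m:ℤ)-1) ((m:ℤ)+1), trm q m j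
        + ∑ j ∈ Icc (-(m:ℤ)-1) ((m:ℤ)+1), badt q m j := by
        rw [← Finset.sum_add_distrib]; exact Finset.sum_congr rfl fun j _ => trm_succ q m j
    _ = Ssum q m := by
        rw [bad_sum, Ssum_eq q m _ _ (by omega) (by omega)]; ring

lemma Ssum_one (q : ℂ) (m : ℕ) : Ssum q m = 1 := by
  induction m with
  | zero =>
    rw [Ssum]
    norm_num
    rw [trm, Ej, Kf]
    norm_num [GB_zero_right]
  | succ m ih => rw [Ssum_succ, ih]

def fib (r : ℕ) : Finset ℤ :=
  if r % 3 = 1 then {(2*(r/3)+1 : ℤ), -(2*(r/3)+1 : ℤ)}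
  else if r % 3 = 0 then {(2*(r/3) : ℤ)} else {-(2*((r+1)/3) : ℤ)}

lemma zpow_toNat' (q : ℂ) (e : ℤ) (he : 0 ≤ e) : q ^ e = q ^ e.toNat := by
  rw [← zpow_natCast, Int.toNat_of_nonneg he]

lemma Ej_eval (j : ℤ) (B : ℤ) (hB : 3*j*j + j = 2*B) : (Ej j : ℤ) = B := by
  have h2 := Ej_spec j
  rw [hB] at h2
  omega

lemma pow_Ej_eq (q : ℂ) (j : ℤ) (B : ℤ) (hB : 3*j*j + j = 2*B) : q ^ (B : ℤ) = q ^ Ej j := by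
  rw [← zpow_natCast q (Ej j), Ej_eval j B hB]

lemma rho_fib (r : ℕ) (j : ℤ) (hj : j ∈ fib r) :
    (if 0 ≤ j then (3*j)/2 else (3*(-j)-1)/2) = (r : ℤ) := by
  rw [fib] at hj
  split_ifs at hj with h1 h2
  · simp only [Finset.mem_insert, Finset.mem_singleton] at hj
    rcases hj with rfl | rfl <;> split_ifs <;> omega
  · simp only [Finset.mem_singleton] at hj
    subst hj; split_ifs <;> omega
  · simp only [Finset.mem_singleton] at hj
    subst hj; split_ifs <;> omega

lemma fib_sum (q : ℂ) (n r : ℕ) (hr : r ≤ n) :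
    ∑ j ∈ fib r, trm q (2*n+1) j = alphaS5 q r * GB q (2*n+1) ((n:ℤ) - r) := by
  rcases (show r % 3 = 0 ∨ r % 3 = 1 ∨ r % 3 = 2 by omega) with h | h | h
  · rw [fib, if_neg (by omega), if_pos h, Finset.sum_singleton, alphaS5, if_pos h, trm]
    set t : ℤ := (r:ℤ)/3 with ht
    rw [if_pos (show (2*t) % 2 = 0 by omega)]
    have hK : Kf (2*n+1) (2*t) = (n:ℤ) - (r:ℤ) := by unfold Kf; push_cast; omega
    rw [hK, pow_Ej_eq q (2*t) (6*t^2 + t) (by ring)]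
    ring
  · rw [fib, if_pos h, alphaS5, if_neg (by omega), if_pos h,
      Finset.sum_pair (show (2*((r:ℤ)/3)+1 : ℤ) ≠ -(2*((r:ℤ)/3)+1) by omega), trm, trm]
    set t : ℤ := (r:ℤ)/3 with ht
    rw [if_neg (show ¬ (2*t+1) % 2 = 0 by omega), if_neg (show ¬ (-(2*t+1)) % 2 = 0 by omega)]
    have hK1 : Kf (2*n+1) (2*t+1) = (n:ℤ) - (r:ℤ) := by unfold Kf; push_cast; omega
    have hK2 : GB q (2*n+1) (Kf (2*n+1) (-(2*t+1))) = GB q (2*n+1) ((n:ℤ) - (r:ℤ)) := by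
      rw [GB_symm q (2*n+1) (Kf (2*n+1) (-(2*t+1)))]
      congr 1; unfold Kf; push_cast; omega
    rw [hK1, hK2, pow_Ej_eq q (2*t+1) (6*t^2 + 7*t + 2) (by ring),
      pow_Ej_eq q (-(2*t+1)) (6*t^2 + 5*t + 1) (by ring)]
    ring
  · rw [fib, if_neg (by omega), if_neg (by omega), Finset.sum_singleton, alphaS5,
      if_neg (by omega), if_neg (by omega), trm]
    set s : ℤ := ((r:ℤ)+1)/3 with hs
    rw [if_pos (show (-(2*s)) % 2 = 0 by omega)]
    have hK : GB q (2*n+1) (Kf (2*n+1) (-(2*s))) = GB q (2*n+1) ((n:ℤ) - (r:ℤ)) := by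
      rw [GB_symm q (2*n+1) (Kf (2*n+1) (-(2*s)))]
      congr 1; unfold Kf; push_cast; omega
    rw [hK, pow_Ej_eq q (-(2*s)) (6*s^2 - s) (by ring)]
    ring

lemma key_sum (q : ℂ) (n : ℕ) :
    ∑ r ∈ Finset.range (n+1), alphaS5 q r * GB q (2*n+1) ((n:ℤ) - r) = 1 := by
  rw [← Ssum_one q (2*n+1), Ssum]
  set U : Finset ℤ := (Finset.range (n+1)).biUnion fib with hU
  have hsub : U ⊆ Icc (-((2*n+1 : ℕ):ℤ)) ((2*n+1 : ℕ):ℤ) := by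
    intro j hj
    obtain ⟨r, hr, hjr⟩ := Finset.mem_biUnion.mp hj
    simp only [Finset.mem_range] at hr
    rw [fib] at hjr
    simp only [Finset.mem_Icc]
    split_ifs at hjr <;>
      simp only [Finset.mem_insert, Finset.mem_singleton] at hjr <;>
      (try rcases hjr with rfl | rfl) <;> (try subst hjr) <;>
      constructor <;> push_cast <;> omega
  have hdisj : (↑(Finset.range (n+1)) : Set ℕ).PairwiseDisjoint fib := by
    intro a _ b _ hab
    simp only [Function.onFun]
    rw [Finset.disjoint_left]
    intro j hja hjb
    have h1 := rho_fib a j hja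
    rw [rho_fib b j hjb] at h1
    exact hab (by exact_mod_cast h1.symm)
  have hvan : ∀ j ∈ Icc (-((2*n+1 : ℕ):ℤ)) ((2*n+1 : ℕ):ℤ), j ∉ U → trm q (2*n+1) j = 0 := by
    intro j _ hjU
    by_contra htrm
    have hGB : GB q (2*n+1) (Kf (2*n+1) j) ≠ 0 := fun hz => htrm (by rw [trm, hz, mul_zero])
    have b1 : 0 ≤ Kf (2*n+1) j := by
      by_contra hc; exact hGB (GB_neg q _ _ (by omega))
    have b2 : Kf (2*n+1) j ≤ ((2*n+1 : ℕ):ℤ) := by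
      by_contra hc; exact hGB (GB_gt q _ _ (by omega))
    have hbd : -2*(n:ℤ) - 2 ≤ 3*j ∧ 3*j ≤ 2*(n:ℤ)+1 := by
      unfold Kf at b1 b2; push_cast at b1 b2; omega
    apply hjU
    rcases le_or_gt 0 j with hj0 | hj0
    · obtain ⟨t, ht⟩ : ∃ t : ℕ, j = 2*(t:ℤ) ∨ j = 2*(t:ℤ)+1 := ⟨(j/2).toNat, by omega⟩
      rcases ht with rfl | rfl
      · refine Finset.mem_biUnion.mpr ⟨3*t, Finset.mem_range.mpr (by omega), ?_⟩
        rw [fib, if_neg (by omega), if_pos (by omega)]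
        simp only [Finset.mem_singleton]; push_cast; omega
      · refine Finset.mem_biUnion.mpr ⟨3*t+1, Finset.mem_range.mpr (by omega), ?_⟩
        rw [fib, if_pos (by omega)]
        simp only [Finset.mem_insert, Finset.mem_singleton]
        left; push_cast; omega
    · obtain ⟨t, ht⟩ : ∃ t : ℕ, j = -(2*(t:ℤ)+1) ∨ j = -(2*(t:ℤ)+2) := ⟨((-j-1)/2).toNat, by omega⟩
      rcases ht with rfl | rfl
      · refine Finset.mem_biUnion.mpr ⟨3*t+1, Finset.mem_range.mpr (by omega), ?_⟩
        rw [fib, if_pos (by omega)]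
        simp only [Finset.mem_insert, Finset.mem_singleton]
        right; push_cast; omega
      · refine Finset.mem_biUnion.mpr ⟨3*t+2, Finset.mem_range.mpr (by omega), ?_⟩
        rw [fib, if_neg (by omega), if_neg (by omega)]
        simp only [Finset.mem_singleton]; push_cast; omega
  rw [← Finset.sum_subset hsub hvan, hU, Finset.sum_biUnion hdisj]
  exact Finset.sum_congr rfl fun r hr => (fib_sum q n r (by simp only [Finset.mem_range] at hr; omega)).symm


theorem stmt5 (q : ℂ) (hq : ‖q‖ < 1) (n : ℕ) :
    1 / qPoch (q ^ 2) q (2 * n)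
      = ∑ r ∈ Finset.range (n + 1), alphaS5 q r / (qPoch q q (n - r) * qPoch (q ^ 2) q (n + r)) := by
  have hD0 : qPoch (q^2) q (2*n) ≠ 0 := qPoch_ne_zero q hq (q^2) 1 rfl _
  calc 1 / qPoch (q ^ 2) q (2 * n)
      = (∑ r ∈ Finset.range (n+1), alphaS5 q r * GB q (2*n+1) ((n:ℤ) - r)) / qPoch (q^2) q (2*n) := by
        rw [key_sum]
    _ = ∑ r ∈ Finset.range (n+1), alphaS5 q r * GB q (2*n+1) ((n:ℤ) - r) / qPoch (q^2) q (2*n) :=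
        Finset.sum_div _ _ _
    _ = ∑ r ∈ Finset.range (n + 1), alphaS5 q r / (qPoch q q (n - r) * qPoch (q ^ 2) q (n + r)) := by
        refine Finset.sum_congr rfl fun r hr => ?_
        have hrn : r ≤ n := by simp only [Finset.mem_range] at hr; omega
        set P1 := qPoch q q (n - r) with hP1def
        set P2 := qPoch (q^2) q (n + r) with hP2def
        set G := GB q (2*n+1) ((n:ℤ) - r) with hGdef
        have hP1 : P1 ≠ 0 := qPoch_ne_zero q hq q 0 (pow_one q).symm _
        have hP2 : P2 ≠ 0 := qPoch_ne_zero q hq (q^2) 1 rfl _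
        have hR : qPoch q q (n+r+1) ≠ 0 := qPoch_ne_zero q hq q 0 (pow_one q).symm _
        have h1 : G * (P1 * qPoch q q (n+r+1)) = qPoch q q (2*n+1) := by
          have := GB_qPoch q (2*n+1) (n-r) (by omega)
          rw [show ((n-r : ℕ) : ℤ) = (n:ℤ) - r by omega,
            show (2*n+1) - (n-r) = n+r+1 by omega] at this
          exact this
        have h2 : qPoch q q (2*n+1) = qPoch q q (n+r+1) * qPoch (q^2 * q^(n+r)) q (n-r) := by
          rw [show 2*n+1 = (n+r+1) + (n-r) by omega, qPoch_add,
            show q * q^(n+r+1) = q^2 * q^(n+r) by ring]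
        have h3 : qPoch (q^2) q (2*n) = P2 * qPoch (q^2 * q^(n+r)) q (n-r) := by
          rw [show 2*n = (n+r) + (n-r) by omega, qPoch_add]
        have h4 : G * P1 = qPoch (q^2 * q^(n+r)) q (n-r) := by
          have := h1.trans h2
          apply mul_left_cancel₀ hR
          calc qPoch q q (n+r+1) * (G * P1) = G * (P1 * qPoch q q (n+r+1)) := by ring
            _ = qPoch q q (n+r+1) * qPoch (q^2 * q^(n+r)) q (n-r) := this
        have hDeq : qPoch (q^2) q (2*n) = P2 * (G * P1) := by rw [h3, h4]
        rw [div_eq_div_iff hD0 (mul_ne_zero hP1 hP2), hDeq]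
        ring
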